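/- arXiv:1208.5850 — 4 statements merged into one kernel-verified Lean document; each statement's English description precedes it below -/
import Mathlib

section
/- Let K be a complete non-archimedean valued field, c ∈ K and ρ ≥ 0. Define the Gauss seminorm x_{c,ρ} on K[T] by x_{c,ρ}(f) = sup_{n≥0} |f^{(n)}(c)/n!| · ρ^n. Then for any polynomial f ∈ K[T] whose roots (in an algebraic closure) all lie at distance at least d > ρ from c, one has x_{c,ρ}(f) = |f(c)|; i.e., the Gauss norm of f is constant equal to |f(c)| on every disk of radius less than the distance from c to the nearest root of f. -/
open Polynomial

lemma hasseDeriv_map' {R S : Type*} [CommRing R] [CommRing S] (φ : R →+* S) (k : ℕ)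
    (f : R[X]) : (f.hasseDeriv k).map φ = (f.map φ).hasseDeriv k := by
  ext n
  simp [coeff_map, hasseDeriv_coeff]

lemma hasseDeriv_linear_mul {R : Type*} [CommRing R] (a : R) (G : R[X]) (m : ℕ) :
    hasseDeriv (m + 1) ((X - C a) * G) =
      (X - C a) * hasseDeriv (m + 1) G + hasseDeriv m G := by
  rw [hasseDeriv_mul,
    Finset.Nat.sum_antidiagonal_eq_sum_range_succ
      (fun i j => hasseDeriv i (X - C a) * hasseDeriv j G),
    Finset.sum_range_succ']
  have h1 : (Finset.range (m + 1)).sum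
      (fun i => hasseDeriv (i + 1) (X - C a) * hasseDeriv (m + 1 - (i + 1)) G)
      = hasseDeriv m G := by
    rw [Finset.sum_eq_single_of_mem 0 (Finset.mem_range.2 (Nat.succ_pos m))]
    · simp [hasseDeriv_one']
    · intro i _ hi
      have : (1:ℕ) < i + 1 := by omega
      rw [map_sub, hasseDeriv_X _ this, hasseDeriv_C _ _ (by omega), sub_zero, zero_mul]
  rw [h1]
  simp [hasseDeriv_zero']
  ring

lemma key_bound {L : Type*} [NormedField L] [IsUltrametricDist L] (c : L) {d : ℝ}
    (hd : 0 < d) (s : Multiset L) :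
    ∀ u : L, (∀ α ∈ s, d ≤ ‖c - α‖) → ∀ n : ℕ,
      ‖(hasseDeriv n (C u * (s.map fun α => X - C α).prod)).eval c‖ * d ^ n ≤
        ‖(C u * (s.map fun α => X - C α).prod).eval c‖ := by
  induction s using Multiset.induction with
  | empty =>
      intro u _ n
      cases n with
      | zero => simp [hasseDeriv_zero']
      | succ m =>
          simp only [Multiset.map_zero, Multiset.prod_zero, mul_one,
            hasseDeriv_C _ _ (Nat.succ_pos m), eval_zero, norm_zero, zero_mul]
          positivity
  | cons α t ih =>
      intro u hs n
      have hα : d ≤ ‖c - α‖ := hs α (Multiset.mem_cons_self _ _)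
      set G : L[X] := C u * (t.map fun β => X - C β).prod with hG
      have hF : C u * ((α ::ₘ t).map fun β => X - C β).prod = (X - C α) * G := by
        rw [Multiset.map_cons, Multiset.prod_cons, hG]; ring
      rw [hF]
      have ihG := ih u (fun β hβ => hs β (Multiset.mem_cons_of_mem hβ))
      cases n with
      | zero => simp [hasseDeriv_zero']
      | succ m =>
          rw [hasseDeriv_linear_mul, eval_add, eval_mul, eval_sub, eval_X, eval_C,
            eval_mul, eval_sub, eval_X, eval_C, norm_mul]
          set A := (hasseDeriv (m + 1) G).eval c
          set B := (hasseDeriv m G).eval c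
          have h1 : ‖(c - α) * A + B‖ ≤ max ‖(c - α) * A‖ ‖B‖ :=
            IsUltrametricDist.norm_add_le_max _ _
          have h2 : ‖(c - α) * A‖ * d ^ (m + 1) ≤ ‖c - α‖ * ‖G.eval c‖ := by
            rw [norm_mul, mul_assoc]
            exact mul_le_mul_of_nonneg_left (ihG (m + 1)) (norm_nonneg _)
          have h3 : ‖B‖ * d ^ (m + 1) ≤ ‖c - α‖ * ‖G.eval c‖ := by
            have hBd : ‖B‖ * d ^ (m + 1) = (‖B‖ * d ^ m) * d := by ring
            rw [hBd]
            calc (‖B‖ * d ^ m) * d ≤ ‖G.eval c‖ * d :=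
                  mul_le_mul_of_nonneg_right (ihG m) hd.le
              _ ≤ ‖G.eval c‖ * ‖c - α‖ :=
                  mul_le_mul_of_nonneg_left hα (norm_nonneg _)
              _ = ‖c - α‖ * ‖G.eval c‖ := mul_comm _ _
          calc ‖(c - α) * A + B‖ * d ^ (m + 1)
              ≤ max ‖(c - α) * A‖ ‖B‖ * d ^ (m + 1) :=
                mul_le_mul_of_nonneg_right h1 (by positivity)
            _ = max (‖(c - α) * A‖ * d ^ (m + 1)) (‖B‖ * d ^ (m + 1)) :=
                (max_mul_of_nonneg _ _ (by positivity))
            _ ≤ ‖c - α‖ * ‖G.eval c‖ := max_le h2 h3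

/-- The Gauss seminorm `x_{c,ρ}` on `K[T]`:
`x_{c,ρ}(f) = sup_n ‖f^{(n)}(c)/n!‖ · ρ^n`, expressed via Hasse derivatives. -/
noncomputable def gaussSeminorm {K : Type*} [NontriviallyNormedField K]
    (c : K) (ρ : ℝ) (f : Polynomial K) : ℝ :=
  ⨆ n : ℕ, ‖(Polynomial.hasseDeriv n f).eval c‖ * ρ ^ n

/-- If all roots of `f` (in an algebraically closed isometric extension `L` of `K`)
lie at distance at least `d > ρ` from `c`, then `x_{c,ρ}(f) = |f(c)|`. -/
theorem gaussSeminorm_eq_of_roots_far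
    {K L : Type*} [NontriviallyNormedField K] [CompleteSpace K] [IsUltrametricDist K]
    [NontriviallyNormedField L] [IsAlgClosed L] [NormedAlgebra K L]
    (hiso : ∀ a : K, ‖algebraMap K L a‖ = ‖a‖)
    (c : K) (ρ d : ℝ) (hρ : 0 ≤ ρ) (hd : ρ < d)
    (f : Polynomial K) (hf : f ≠ 0)
    (hroots : ∀ α ∈ (f.map (algebraMap K L)).roots, d ≤ ‖algebraMap K L c - α‖) :
    gaussSeminorm c ρ f = ‖f.eval c‖ := by
  have : IsUltrametricDist L := IsUltrametricDist.of_normedAlgebra K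
  have hd0 : 0 < d := lt_of_le_of_lt hρ hd
  set φ := algebraMap K L
  set c' := φ c with hc'
  set F := f.map φ with hFdef
  have hnorm : ∀ n : ℕ, ‖(hasseDeriv n f).eval c‖ = ‖(hasseDeriv n F).eval c'‖ := by
    intro n
    rw [← hiso ((hasseDeriv n f).eval c)]
    congr 1
    rw [← hasseDeriv_map', eval_map, eval₂_at_apply]
  have hfc : ‖f.eval c‖ = ‖F.eval c'‖ := by
    rw [← hiso (f.eval c)]
    congr 1
    rw [eval_map, eval₂_at_apply]
  have hsplit : F = C F.leadingCoeff * (F.roots.map fun a => X - C a).prod :=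
    (IsAlgClosed.splits F).eq_prod_roots
  have bound : ∀ n : ℕ, ‖(hasseDeriv n F).eval c'‖ * d ^ n ≤ ‖F.eval c'‖ := by
    intro n
    conv_lhs => rw [hsplit]
    conv_rhs => rw [hsplit]
    exact key_bound c' hd0 F.roots F.leadingCoeff hroots n
  have hle : ∀ n : ℕ, ‖(hasseDeriv n f).eval c‖ * ρ ^ n ≤ ‖f.eval c‖ := by
    intro n
    rw [hnorm n, hfc]
    calc ‖(hasseDeriv n F).eval c'‖ * ρ ^ n
        ≤ ‖(hasseDeriv n F).eval c'‖ * d ^ n :=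
          mul_le_mul_of_nonneg_left (pow_le_pow_left₀ hρ hd.le n) (norm_nonneg _)
      _ ≤ ‖F.eval c'‖ := bound n
  unfold gaussSeminorm
  apply le_antisymm
  · exact ciSup_le hle
  · have h0 : ‖(hasseDeriv 0 f).eval c‖ * ρ ^ 0 = ‖f.eval c‖ := by
      simp [hasseDeriv_zero']
    rw [← h0]
    exact le_ciSup ⟨‖f.eval c‖, Set.forall_mem_range.2 hle⟩ 0
end

section
/- Let p be a prime and k an integer with gcd(k,p) = 1. The p-adic radius of convergence of the binomial series Σ_{s≥0} binom(k/p, s) z^s, i.e. liminf_{s→∞} |binom(k/p, s)|_p^{−1/s}, equals p^{−p/(p−1)} = ω^p, where ω = p^{−1/(p−1)}. -/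
open Filter

/-- The generalized binomial coefficient `binom(x,s) = x(x−1)⋯(x−s+1)/s!` for `x ∈ ℚ`. -/
noncomputable def ratChoose (x : ℚ) (s : ℕ) : ℚ :=
  (∏ j ∈ Finset.range s, (x - j)) / (Nat.factorial s)

lemma norm_ratChoose (p : ℕ) [hp : Fact p.Prime] (k : ℤ) (hk : ¬ ((p : ℤ) ∣ k)) (s : ℕ) :
    ‖((ratChoose ((k : ℚ) / p) s : ℚ) : ℚ_[p])‖
      = (p : ℝ) ^ ((s : ℤ) + padicValNat p s.factorial) := by
  have hp0 : (p : ℚ_[p]) ≠ 0 := Nat.cast_ne_zero.2 hp.out.ne_zero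
  have hfac : ((s.factorial : ℚ_[p])) ≠ 0 := Nat.cast_ne_zero.2 s.factorial_ne_zero
  have hfacnorm : ‖((s.factorial : ℚ_[p]))‖ = (p : ℝ) ^ (-(padicValNat p s.factorial : ℤ)) := by
    rw [Padic.norm_eq_zpow_neg_valuation hfac, Padic.valuation_natCast]
  have hfactor : ∀ j ∈ Finset.range s, ‖(k : ℚ_[p]) / p - j‖ = (p : ℝ) := by
    intro j _
    have h1 : (k : ℚ_[p]) / p - j = ((k - j * p : ℤ) : ℚ_[p]) / p := by
      field_simp
      push_cast
      ring
    rw [h1, norm_div, Padic.norm_p]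
    have h2 : ‖((k - j * p : ℤ) : ℚ_[p])‖ = 1 := by
      refine le_antisymm (Padic.norm_int_le_one _) ?_
      by_contra h
      push_neg at h
      have := Padic.norm_intCast_lt_one_iff.1 h
      have h3 : (p : ℤ) ∣ (j : ℤ) * p := ⟨j, mul_comm _ _⟩
      exact hk (by simpa using dvd_add this h3)
    rw [h2]
    simp [hp.out.pos.ne']
  unfold ratChoose
  push_cast
  rw [norm_div, norm_prod, Finset.prod_congr rfl hfactor, Finset.prod_const, hfacnorm,
    Finset.card_range]
  rw [zpow_add₀ (by exact_mod_cast hp.out.pos.ne' : (p:ℝ) ≠ 0)]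
  rw [div_eq_mul_inv, ← zpow_neg, neg_neg, zpow_natCast]
  norm_cast

lemma tendsto_padicValNat_factorial_div (p : ℕ) [hp : Fact p.Prime] :
    Tendsto (fun n : ℕ => (padicValNat p n.factorial : ℝ) / n) atTop
      (nhds (1 / ((p : ℝ) - 1))) := by
  have hp1 : (1:ℝ) < p := by exact_mod_cast hp.out.one_lt
  have hpm : (0:ℝ) < (p:ℝ) - 1 := by linarith
  have hp' : 1 ≤ p := hp.out.one_lt.le
  have hS : Tendsto (fun n : ℕ => ((p.digits n).sum : ℝ) / n) atTop (nhds 0) := by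
    have hlog : Tendsto (fun n : ℕ => (Real.logb p n + 1) / n) atTop (nhds 0) := by
      have h1 : Tendsto (fun x : ℝ => Real.log x / x) atTop (nhds 0) :=
        Real.isLittleO_log_id_atTop.tendsto_div_nhds_zero
      have h2 : Tendsto (fun n : ℕ => Real.log n / n) atTop (nhds 0) :=
        h1.comp tendsto_natCast_atTop_atTop
      have h3 : Tendsto (fun n : ℕ => Real.log n / n / Real.log p + 1 / n) atTop
          (nhds (0 / Real.log p + 0)) :=
        (h2.div_const _).add tendsto_one_div_atTop_nhds_zero_nat
      simp only [zero_div, add_zero] at h3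
      refine h3.congr fun n => ?_
      rw [Real.logb, add_div, div_div, div_div, mul_comm]
    have hub : Tendsto (fun n : ℕ => ((p:ℝ) - 1) * ((Real.logb p n + 1) / n)) atTop
        (nhds (((p:ℝ)-1) * 0)) := hlog.const_mul _
    rw [mul_zero] at hub
    refine squeeze_zero' ?_ ?_ hub
    · filter_upwards [eventually_ge_atTop 1] with n hn
      have : (0:ℝ) < n := by exact_mod_cast hn
      positivity
    · filter_upwards [eventually_ge_atTop 1] with n hn
      have hn0 : (0:ℝ) < n := by exact_mod_cast hn
      have hd : ∀ d ∈ p.digits n, d ≤ p - 1 := fun d hd =>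
        Nat.le_sub_one_of_lt (Nat.digits_lt_base hp.out.one_lt hd)
      have h1 : (p.digits n).sum ≤ (p.digits n).length * (p-1) := by
        simpa using List.sum_le_card_nsmul _ _ hd
      have h2 : (p.digits n).length = Nat.log p n + 1 :=
        Nat.digits_len p n hp.out.one_lt (by omega)
      rw [h2] at h1
      have h3 : ((p.digits n).sum : ℝ) ≤ ((Nat.log p n : ℝ) + 1) * ((p:ℝ) - 1) := by
        calc ((p.digits n).sum : ℝ) ≤ (((Nat.log p n + 1) * (p-1) : ℕ) : ℝ) := by
              exact_mod_cast h1
          _ = ((Nat.log p n : ℝ) + 1) * ((p:ℝ) - 1) := by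
              push_cast [Nat.cast_sub hp']; ring
      have h4 : (Nat.log p n : ℝ) ≤ Real.logb p n := Real.natLog_le_logb n p
      have hSn : ((p.digits n).sum : ℝ) ≤ ((p:ℝ)-1) * (Real.logb p n + 1) := by
        nlinarith
      calc ((p.digits n).sum : ℝ) / n ≤ (((p:ℝ)-1) * (Real.logb p n + 1)) / n := by
            gcongr
        _ = ((p:ℝ)-1) * ((Real.logb p n + 1) / n) := by ring
  have key : ∀ n : ℕ, ((p:ℝ) - 1) * (padicValNat p n.factorial : ℝ)
      = (n : ℝ) - ((p.digits n).sum : ℝ) := by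
    intro n
    have hle := Nat.digit_sum_le p n
    have h := sub_one_mul_padicValNat_factorial (p := p) n
    have hc := congrArg (Nat.cast : ℕ → ℝ) h
    rw [Nat.cast_mul, Nat.cast_sub hle, Nat.cast_sub hp'] at hc
    simpa using hc
  have h4 : Tendsto (fun n : ℕ => (1 - ((p.digits n).sum : ℝ) / n) / ((p:ℝ) - 1)) atTop
      (nhds ((1 - 0) / ((p:ℝ) - 1))) := (tendsto_const_nhds.sub hS).div_const _
  rw [show ((1:ℝ) - 0) / ((p:ℝ) - 1) = 1 / ((p:ℝ)-1) by norm_num] at h4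
  refine h4.congr' ?_
  filter_upwards [eventually_ge_atTop 1] with n hn
  have hn0 : (n:ℝ) ≠ 0 := by positivity
  rw [div_eq_div_iff hpm.ne' hn0, sub_mul, one_mul, div_mul_cancel₀ _ hn0]
  linarith [key n]

/-- For `p` prime and `p ∤ k`, the `p`-adic radius of convergence
`liminf_s |binom(k/p,s)|_p^{−1/s}` of the binomial series `Σ binom(k/p,s) z^s`
equals `p^{−p/(p−1)} = ω^p`. -/
theorem liminf_radius_binomial_series (p : ℕ) [hp : Fact p.Prime] (k : ℤ)
    (hk : ¬ ((p : ℤ) ∣ k)) :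
    Filter.liminf
        (fun s : ℕ => ‖((ratChoose ((k : ℚ) / p) s : ℚ) : ℚ_[p])‖ ^ (-(1 : ℝ) / s)) atTop
      = (p : ℝ) ^ (-(p : ℝ) / (p - 1)) := by
  have hp1 : (1:ℝ) < p := by exact_mod_cast hp.out.one_lt
  have hppos : (0:ℝ) < p := by linarith
  have hpm : (0:ℝ) < (p:ℝ) - 1 := by linarith
  have hexp : Tendsto (fun s : ℕ => ((s:ℝ) + (padicValNat p s.factorial : ℝ)) * (-(1:ℝ)/s))
      atTop (nhds (-(p:ℝ)/((p:ℝ)-1))) := by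
    have h1 : Tendsto (fun s : ℕ => -(1 + (padicValNat p s.factorial : ℝ)/s)) atTop
        (nhds (-(1 + 1/((p:ℝ)-1)))) :=
      (tendsto_const_nhds.add (tendsto_padicValNat_factorial_div p)).neg
    have hval : -(1 + 1/((p:ℝ)-1)) = -(p:ℝ)/((p:ℝ)-1) := by
      field_simp
      ring
    rw [hval] at h1
    refine h1.congr' ?_
    filter_upwards [eventually_ge_atTop 1] with s hs
    have hs0 : (s:ℝ) ≠ 0 := by positivity
    field_simp
  have hf : Tendsto (fun s : ℕ => ‖((ratChoose ((k : ℚ) / p) s : ℚ) : ℚ_[p])‖ ^ (-(1 : ℝ) / s))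
      atTop (nhds ((p:ℝ) ^ (-(p:ℝ)/((p:ℝ)-1)))) := by
    have h2 := (tendsto_const_nhds (x := (p:ℝ))).rpow hexp (Or.inl hppos.ne')
    refine h2.congr fun s => ?_
    rw [norm_ratChoose p k hk s, ← Real.rpow_intCast, ← Real.rpow_mul hppos.le]
    push_cast
    rw [show ((padicValRat p (s.factorial : ℚ)) : ℝ) = ((padicValNat p s.factorial : ℝ)) by
      norm_cast]
  exact hf.liminf_eq
end

section
/- Let r ≥ 1, let i_1 < i < i_2 be integers in {0,…,r}, and suppose h : {0,…,r} → ℝ is convex (non-decreasing slope differences). Define the linear interpolation G := h_{i_1} + (i − i_1)·(h_{i_2} − h_{i_1})/(i_2 − i_1). Then h_i ≤ G. Consequently, for a family of convex functions h(x) : {0,…,r} → ℝ depending on a parameter and whose values at indices i_1 and i_2 are super-harmonic (in the sense of having non-positive finite weighted sums of directional right-derivatives at a given parameter point) with h_i(x_0) = G(x_0) at the base point, the index-i partial height h_i is also super-harmonic at that point. -/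
open Set

lemma interp_aux (r i₁ i i₂ : ℕ) (h₁ : i₁ < i) (h₂ : i < i₂) (h₃ : i₂ ≤ r) (h : ℕ → ℝ)
    (hc : ∀ j : ℕ, 1 ≤ j → j < r → h j - h (j - 1) ≤ h (j + 1) - h j) :
    h i ≤ h i₁ + ((i : ℝ) - i₁) * (h i₂ - h i₁) / ((i₂ : ℝ) - i₁) := by
  have mono : ∀ a b : ℕ, a ≤ b → b < r → h (a + 1) - h a ≤ h (b + 1) - h b := by
    intro a b hab
    induction b, hab using Nat.le_induction with
    | base => intro _; exact le_refl _
    | succ b hab ih =>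
      intro hbr
      have hbr' : b < r := Nat.lt_of_succ_lt hbr
      have := hc (b + 1) (Nat.le_add_left 1 b) hbr
      simp only [Nat.add_sub_cancel] at this
      linarith [ih hbr']
  have lemB : ∀ k : ℕ, i₁ < k → k ≤ r → h k - h i₁ ≤ ((k : ℝ) - i₁) * (h k - h (k - 1)) := by
    intro k hk
    induction k, hk using Nat.le_induction with
    | base =>
      intro _
      have e : i₁ + 1 - 1 = i₁ := by omega
      rw [e]; push_cast; ring_nf; exact le_refl _
    | succ k hk ih =>
      intro hkr
      have e : k + 1 - 1 = k := by omega
      rw [e]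
      have ihk := ih (by omega)
      have e2 : k - 1 + 1 = k := by omega
      have slope := mono (k - 1) k (by omega) (by omega)
      rw [e2] at slope
      have hnn : (0:ℝ) ≤ (k : ℝ) - i₁ := by
        have : (i₁ : ℝ) ≤ k := by exact_mod_cast le_of_lt hk
        linarith
      push_cast
      nlinarith [mul_le_mul_of_nonneg_left slope hnn]
  have lemC : ∀ k : ℕ, i < k → k ≤ r → ((k : ℝ) - i) * (h (i + 1) - h i) ≤ h k - h i := by
    intro k hk
    induction k, hk using Nat.le_induction with
    | base => intro _; rw [Nat.succ_eq_add_one]; push_cast; ring_nf; linarith [le_refl (h (i+1))]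
    | succ k hk ih =>
      intro hkr
      have ihk := ih (by omega)
      have slope := mono i k (by omega) (by omega)
      push_cast
      push_cast at ihk
      nlinarith [ihk, slope]
  have hB := lemB i h₁ (le_of_lt (Nat.lt_of_lt_of_le h₂ h₃))
  have hC := lemC i₂ h₂ h₃
  have e2 : i - 1 + 1 = i := by omega
  have sl := mono (i - 1) i (by omega) (by omega)
  rw [e2] at sl
  have hA : (0:ℝ) < (i : ℝ) - i₁ := by
    have : (i₁ : ℝ) < i := by exact_mod_cast h₁
    linarith
  have hBpos : (0:ℝ) < (i₂ : ℝ) - i := by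
    have : (i : ℝ) < i₂ := by exact_mod_cast h₂
    linarith
  have hpos : (0:ℝ) < (i₂ : ℝ) - i₁ := by linarith
  rw [← sub_le_iff_le_add', le_div_iff₀ hpos]
  have key : ((i₂:ℝ) - i₁) * (h i - h i₁) ≤ ((i:ℝ) - i₁) * (h i₂ - h i₁) := by
    nlinarith [mul_le_mul_of_nonneg_left sl (le_of_lt hA)]
  nlinarith [key]

lemma deriv_nonpos_aux {f : ℝ → ℝ} {d : ℝ} (hf : HasDerivWithinAt f d (Set.Ici 0) 0)
    (hle : ∀ s : ℝ, 0 ≤ s → f s ≤ f 0) : d ≤ 0 := by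
  have ht := hasDerivWithinAt_iff_tendsto_slope.mp hf
  rw [Set.Ici_sdiff_left] at ht
  refine le_of_tendsto ht ?_
  filter_upwards [self_mem_nhdsWithin] with s hs
  have hs0 : (0:ℝ) < s := hs
  rw [slope_def_field]
  have := hle s hs0.le
  apply div_nonpos_of_nonpos_of_nonneg <;> linarith

/-- Interpolation of partial heights of convergence Newton polygons, and the resulting
super-harmonicity at non-vertex indices: (1) any convex `h : {0,…,r} → ℝ` satisfies
`h i ≤ h i₁ + (i − i₁)(h i₂ − h i₁)/(i₂ − i₁)` for `i₁ < i < i₂ ≤ r`; (2) for a family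
`H b s : {0,…,r} → ℝ` of convex functions (branches `b` with multiplicities `m b`,
parameter `s ≥ 0`, common value `h₀` at `s = 0`), if `h₀ i` equals the linear
interpolation of `h₀` between `i₁` and `i₂` and the heights at indices `i₁` and `i₂`
are super-harmonic (non-positive weighted sums of right derivatives at `s = 0`), then
the index-`i` height is super-harmonic as well. -/
theorem npHeight_interpolation_superharmonic
    (r i₁ i i₂ : ℕ) (h₁ : i₁ < i) (h₂ : i < i₂) (h₃ : i₂ ≤ r)
    {ι : Type*} [Fintype ι] (m : ι → ℕ) (hm : ∀ b, 0 < m b)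
    (H : ι → ℝ → ℕ → ℝ) (h₀ : ℕ → ℝ)
    (hbase : ∀ b, H b 0 = h₀)
    (hconv : ∀ b, ∀ s : ℝ, 0 ≤ s → ∀ j : ℕ, 1 ≤ j → j < r →
      H b s j - H b s (j - 1) ≤ H b s (j + 1) - H b s j)
    (heq : h₀ i = h₀ i₁ + ((i : ℝ) - i₁) * (h₀ i₂ - h₀ i₁) / ((i₂ : ℝ) - i₁))
    (d : ι → ℕ → ℝ)
    (hd : ∀ b, ∀ j ∈ ({i₁, i, i₂} : Set ℕ),
      HasDerivWithinAt (fun s => H b s j) (d b j) (Set.Ici 0) 0)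
    (hsh₁ : ∑ b, (m b : ℝ) * d b i₁ ≤ 0)
    (hsh₂ : ∑ b, (m b : ℝ) * d b i₂ ≤ 0) :
    (∀ h : ℕ → ℝ,
      (∀ j : ℕ, 1 ≤ j → j < r → h j - h (j - 1) ≤ h (j + 1) - h j) →
      h i ≤ h i₁ + ((i : ℝ) - i₁) * (h i₂ - h i₁) / ((i₂ : ℝ) - i₁)) ∧
    ∑ b, (m b : ℝ) * d b i ≤ 0 := by
  have hA : (0:ℝ) < (i : ℝ) - i₁ := by
    have : (i₁ : ℝ) < i := by exact_mod_cast h₁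
    linarith
  have hBpos : (0:ℝ) < (i₂ : ℝ) - i := by
    have : (i : ℝ) < i₂ := by exact_mod_cast h₂
    linarith
  have hpos : (0:ℝ) < (i₂ : ℝ) - i₁ := by linarith
  refine ⟨fun h hc => interp_aux r i₁ i i₂ h₁ h₂ h₃ h hc, ?_⟩
  set c : ℝ := (i₂ : ℝ) - i₁ with hc
  set cA : ℝ := (i : ℝ) - i₁ with hcA
  set cB : ℝ := (i₂ : ℝ) - i with hcB
  set F : ℝ → ℝ := fun s => ∑ b, (m b : ℝ) *
      (c * H b s i - cB * H b s i₁ - cA * H b s i₂) with hF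
  have hmemi : i ∈ ({i₁, i, i₂} : Set ℕ) := by simp
  have hmemi₁ : i₁ ∈ ({i₁, i, i₂} : Set ℕ) := by simp
  have hmemi₂ : i₂ ∈ ({i₁, i, i₂} : Set ℕ) := by simp
  have hFd : HasDerivWithinAt F
      (∑ b, (m b : ℝ) * (c * d b i - cB * d b i₁ - cA * d b i₂)) (Set.Ici 0) 0 := by
    apply HasDerivWithinAt.fun_sum
    intro b _
    exact ((((hd b i hmemi).const_mul c).sub ((hd b i₁ hmemi₁).const_mul cB)).sub
      ((hd b i₂ hmemi₂).const_mul cA)).const_mul ((m b : ℝ))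
  have hF0 : F 0 = 0 := by
    have hterm : c * h₀ i - cB * h₀ i₁ - cA * h₀ i₂ = 0 := by
      have h' : h₀ i * c = (h₀ i₁ + cA * (h₀ i₂ - h₀ i₁) / c) * c := by rw [← heq]
      field_simp at h'
      simp only [hc, hcA, hcB] at h' ⊢
      linear_combination h'
    rw [hF]
    apply Finset.sum_eq_zero
    intro b _
    rw [hbase b, hterm, mul_zero]
  have hFle : ∀ s : ℝ, 0 ≤ s → F s ≤ F 0 := by
    intro s hs
    rw [hF0, hF]
    apply Finset.sum_nonpos
    intro b _
    apply mul_nonpos_of_nonneg_of_nonpos (by positivity)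
    have hint := interp_aux r i₁ i i₂ h₁ h₂ h₃ (H b s) (hconv b s hs)
    rw [← sub_le_iff_le_add', le_div_iff₀ hpos] at hint
    simp only [hc, hcA, hcB] at hint ⊢
    nlinarith [hint]
  have hD := deriv_nonpos_aux hFd hFle
  have expand : ∑ b, (m b : ℝ) * (c * d b i - cB * d b i₁ - cA * d b i₂)
      = c * (∑ b, (m b : ℝ) * d b i) - cB * (∑ b, (m b : ℝ) * d b i₁)
        - cA * (∑ b, (m b : ℝ) * d b i₂) := by
    rw [Finset.mul_sum, Finset.mul_sum, Finset.mul_sum, ← Finset.sum_sub_distrib,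
      ← Finset.sum_sub_distrib]
    apply Finset.sum_congr rfl
    intro b _
    ring
  rw [expand] at hD
  have h1 : cB * (∑ b, (m b : ℝ) * d b i₁) ≤ 0 :=
    mul_nonpos_of_nonneg_of_nonpos (le_of_lt hBpos) hsh₁
  have h2 : cA * (∑ b, (m b : ℝ) * d b i₂) ≤ 0 :=
    mul_nonpos_of_nonneg_of_nonpos (le_of_lt hA) hsh₂
  nlinarith [hD, h1, h2, hpos]
end

section
/- Let K be a complete non-archimedean field and let x_{c,ρ} denote the Gauss seminorm on K[T]. Then for any c ∈ K and ρ, σ ≥ 0, the Gauss point obtained by 'moving up' by σ from x_{c,ρ} satisfies: the seminorm λ(σ) defined by λ(σ)(f) := sup_{n≥0} x_{c,ρ}(f^{(n)}/n!) · σ^n equals the Gauss seminorm x_{c, max(ρ,σ)}. In particular λ(σ) = x_{c,ρ} whenever σ ≤ ρ. -/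
open Polynomial

/-- The point `λ_x(σ)` at distance `σ` above the point `x` toward infinity:
`λ_x(σ)(f) := sup_n x(f^{(n)}/n!) · σ^n`. -/
noncomputable def lambdaPoint {K : Type*} [NontriviallyNormedField K]
    (x : Polynomial K → ℝ) (σ : ℝ) (f : Polynomial K) : ℝ :=
  ⨆ n : ℕ, x (Polynomial.hasseDeriv n f) * σ ^ n

private lemma bddAbove_of_eventually_zero {g : ℕ → ℝ} (N : ℕ)
    (h : ∀ n, N ≤ n → g n = 0) : BddAbove (Set.range g) := by
  have : Set.range g ⊆ ↑((Finset.range (N + 1)).image g) := by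
    rintro _ ⟨n, rfl⟩
    by_cases hn : n < N + 1
    · exact Finset.mem_coe.2 (Finset.mem_image.2 ⟨n, Finset.mem_range.2 hn, rfl⟩)
    · have : g n = g N := by
        rw [h n (by omega), h N le_rfl]
      rw [this]
      exact Finset.mem_coe.2 (Finset.mem_image.2 ⟨N, Finset.mem_range.2 (by omega), rfl⟩)
  exact (((Finset.range (N + 1)).image g).finite_toSet.bddAbove).mono this

private lemma gauss_bddAbove {K : Type*} [NontriviallyNormedField K]
    (c : K) (ρ : ℝ) (f : Polynomial K) :
    BddAbove (Set.range fun n : ℕ => ‖(Polynomial.hasseDeriv n f).eval c‖ * ρ ^ n) := by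
  refine bddAbove_of_eventually_zero (f.natDegree + 1) fun n hn => ?_
  rw [Polynomial.hasseDeriv_eq_zero_of_lt_natDegree f n (by omega)]
  simp

private lemma gauss_nonneg {K : Type*} [NontriviallyNormedField K]
    (c : K) {ρ : ℝ} (hρ : 0 ≤ ρ) (f : Polynomial K) : 0 ≤ gaussSeminorm c ρ f := by
  have := le_ciSup (gauss_bddAbove c ρ f) 0
  simp only [pow_zero, mul_one] at this
  exact le_trans (norm_nonneg _) this

private lemma gauss_zero {K : Type*} [NontriviallyNormedField K]
    (c : K) (ρ : ℝ) : gaussSeminorm c ρ (0 : Polynomial K) = 0 := by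
  unfold gaussSeminorm
  simp [ciSup_const]

/-- Moving up by `σ` from the Gauss point `x_{c,ρ}` gives the Gauss point
`x_{c, max(ρ,σ)}`; in particular `λ_{x_{c,ρ}}(σ) = x_{c,ρ}` whenever `σ ≤ ρ`. -/
theorem lambdaPoint_gaussSeminorm
    {K : Type*} [NontriviallyNormedField K] [CompleteSpace K] [IsUltrametricDist K]
    (c : K) (ρ σ : ℝ) (hρ : 0 ≤ ρ) (hσ : 0 ≤ σ) :
    (∀ f : Polynomial K,
      lambdaPoint (gaussSeminorm c ρ) σ f = gaussSeminorm c (max ρ σ) f) ∧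
    (σ ≤ ρ → ∀ f : Polynomial K,
      lambdaPoint (gaussSeminorm c ρ) σ f = gaussSeminorm c ρ f) := by
  have hmax : (0:ℝ) ≤ max ρ σ := le_trans hρ (le_max_left _ _)
  have main : ∀ f : Polynomial K,
      lambdaPoint (gaussSeminorm c ρ) σ f = gaussSeminorm c (max ρ σ) f := by
    intro f
    set S := gaussSeminorm c (max ρ σ) f with hS
    have hSbdd := gauss_bddAbove c (max ρ σ) f
    have hSnn : 0 ≤ S := gauss_nonneg c hmax f
    have hLbdd : BddAbove (Set.range fun n : ℕ =>
        gaussSeminorm c ρ (Polynomial.hasseDeriv n f) * σ ^ n) := by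
      refine bddAbove_of_eventually_zero (f.natDegree + 1) fun n hn => ?_
      rw [Polynomial.hasseDeriv_eq_zero_of_lt_natDegree f n (by omega), gauss_zero, zero_mul]
    apply le_antisymm
    · -- lam ≤ S
      refine ciSup_le fun n => ?_
      rcases eq_or_lt_of_le (pow_nonneg hσ n) with h0 | hpos
      · rw [← h0, mul_zero]; exact hSnn
      · rw [← le_div_iff₀ hpos]
        refine ciSup_le fun m => ?_
        rw [le_div_iff₀ hpos]
        -- term: ‖(hasseDeriv m (hasseDeriv n f)).eval c‖ * ρ^m * σ^n ≤ S
        have hcomp : Polynomial.hasseDeriv m (Polynomial.hasseDeriv n f)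
            = (m + n).choose m • Polynomial.hasseDeriv (m + n) f := by
          have := congrArg (fun L => L f) (Polynomial.hasseDeriv_comp (R := K) m n)
          simpa using this
        have hnorm : ‖(Polynomial.hasseDeriv m (Polynomial.hasseDeriv n f)).eval c‖
            ≤ ‖(Polynomial.hasseDeriv (m + n) f).eval c‖ := by
          rw [hcomp]
          have : (((m + n).choose m • Polynomial.hasseDeriv (m + n) f : Polynomial K)).eval c
              = ((m + n).choose m : K) * (Polynomial.hasseDeriv (m + n) f).eval c := by
            simp [nsmul_eq_mul]
          rw [this, norm_mul]
          calc ‖((m + n).choose m : K)‖ * ‖(Polynomial.hasseDeriv (m + n) f).eval c‖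
              ≤ 1 * ‖(Polynomial.hasseDeriv (m + n) f).eval c‖ :=
                mul_le_mul_of_nonneg_right
                  (IsUltrametricDist.norm_natCast_le_one K _) (norm_nonneg _)
            _ = _ := one_mul _
        have hpow : ρ ^ m * σ ^ n ≤ max ρ σ ^ (m + n) := by
          rw [pow_add]
          exact mul_le_mul (pow_le_pow_left₀ hρ (le_max_left _ _) m)
            (pow_le_pow_left₀ hσ (le_max_right _ _) n) (pow_nonneg hσ n)
            (pow_nonneg hmax m)
        calc ‖(Polynomial.hasseDeriv m (Polynomial.hasseDeriv n f)).eval c‖ * ρ ^ m * σ ^ n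
            ≤ ‖(Polynomial.hasseDeriv (m + n) f).eval c‖ * (max ρ σ ^ (m + n)) := by
              rw [mul_assoc]
              exact mul_le_mul hnorm hpow
                (mul_nonneg (pow_nonneg hρ m) (pow_nonneg hσ n)) (norm_nonneg _)
          _ ≤ S := le_ciSup hSbdd (m + n)
    · -- S ≤ λ
      refine ciSup_le fun k => ?_
      rcases max_cases ρ σ with ⟨hm, _⟩ | ⟨hm, _⟩
      · -- max = ρ : use n = 0 term
        rw [hm]
        have h1 : ‖(Polynomial.hasseDeriv k f).eval c‖ * ρ ^ k
            ≤ gaussSeminorm c ρ f := le_ciSup (gauss_bddAbove c ρ f) k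
        have h2 : gaussSeminorm c ρ (Polynomial.hasseDeriv 0 f) * σ ^ 0
            ≤ lambdaPoint (gaussSeminorm c ρ) σ f := le_ciSup hLbdd 0
        simp only [Polynomial.hasseDeriv_zero', pow_zero, mul_one] at h2
        exact le_trans h1 h2
      · -- max = σ : use n = k term
        rw [hm]
        have h1 : ‖(Polynomial.hasseDeriv k f).eval c‖
            ≤ gaussSeminorm c ρ (Polynomial.hasseDeriv k f) := by
          have := le_ciSup (gauss_bddAbove c ρ (Polynomial.hasseDeriv k f)) 0
          simpa [Polynomial.hasseDeriv_zero', gaussSeminorm] using this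
        have h2 : gaussSeminorm c ρ (Polynomial.hasseDeriv k f) * σ ^ k
            ≤ lambdaPoint (gaussSeminorm c ρ) σ f := le_ciSup hLbdd k
        exact le_trans (mul_le_mul_of_nonneg_right h1 (pow_nonneg hσ k)) h2
  exact ⟨main, fun hσρ f => by rw [main f, max_eq_left hσρ]⟩
end
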